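/- Let A₁, …, A_m ∈ ℝ^{d×d} be symmetric, pairwise commuting, linearly independent matrices and y₁, …, y_m ∈ ℝ. For each α > 0 let Z_α : [0,∞) → ℝ^{d×d} be differentiable with Z_α(0) = α·I and, for all t ≥ 0, Z_α′(t) = −2·(Σ_{i=1}^m (⟨A_i, Z_α(t)·Z_α(t)ᵀ⟩ − y_i)·A_i)·Z_α(t) (gradient flow on Z ↦ ℓ(Z Zᵀ) initialized at α·I). Assume that for every α > 0 the limit W_∞(α) := lim_{t→∞} Z_α(t)·Z_α(t)ᵀ exists, that the limit W̄ := lim_{α→0⁺} W_∞(α) exists, that W̄ is positive semidefinite, and that ⟨A_i, W̄⟩ = y_i for all i. Then W̄ has minimal nuclear norm among feasible positive semidefinite matrices: for every positive semidefinite W ∈ ℝ^{d×d} with ⟨A_i, W⟩ = y_i for all i, tr(W̄) ≤ tr(W). -/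

import Mathlib

open Matrix Filter Topology

/-- The Frobenius gradient of the loss `ℓ(W) = ½ Σᵢ (yᵢ − ⟨Aᵢ, W⟩)²`, where
`⟨A, W⟩ = tr(Aᵀ W)` is the Frobenius inner product. -/
noncomputable def gradLoss {d m : ℕ} (A : Fin m → Matrix (Fin d) (Fin d) ℝ)
    (y : Fin m → ℝ) (W : Matrix (Fin d) (Fin d) ℝ) : Matrix (Fin d) (Fin d) ℝ :=
  ∑ i, ((((A i)ᵀ * W).trace) - y i) • A i


lemma exists_simul_diag {d m : ℕ} (A : Fin m → Matrix (Fin d) (Fin d) ℝ)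
    (hA_symm : ∀ i, (A i).IsSymm)
    (hA_comm : ∀ i j, Commute (A i) (A j)) :
    ∃ (U : Matrix (Fin d) (Fin d) ℝ) (lam : Fin m → Fin d → ℝ),
      Uᵀ * U = 1 ∧ ∀ i, A i * U = U * Matrix.diagonal (lam i) := by
  classical
  set E := EuclideanSpace ℝ (Fin d)
  set T : Fin m → (E →ₗ[ℝ] E) := fun i => Matrix.toEuclideanLin (A i) with hT_def
  have hT : ∀ i, (T i).IsSymmetric := by
    intro i
    refine Matrix.isHermitian_iff_isSymmetric.mp ?_
    show (A i)ᴴ = A i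
    rw [Matrix.conjTranspose_eq_transpose_of_trivial]
    exact hA_symm i
  have hTmul : ∀ a b : Fin m, T a * T b = Matrix.toEuclideanLin (A a * A b) := by
    intro a b
    ext x p
    show (A a *ᵥ (A b *ᵥ (fun j => x j))) p = ((A a * A b) *ᵥ (fun j => x j)) p
    rw [Matrix.mulVec_mulVec]
  have hC : Pairwise (Function.onFun Commute T) := by
    intro i j _
    show T i * T j = T j * T i
    rw [hTmul, hTmul, hA_comm i j]
  set V : (Fin m → ℝ) → Submodule ℝ E := fun γ => ⨅ j, Module.End.eigenspace (T j) (γ j) with hV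
  have htop : ⨆ γ, V γ = ⊤ := LinearMap.IsSymmetric.iSup_iInf_eq_top_of_commute hT hC
  have hOF := LinearMap.IsSymmetric.orthogonalFamily_iInf_eigenspaces hT
  have hcomp : IsCompactElement (⊤ : Submodule ℝ E) :=
    (Submodule.fg_iff_compact _).mp (Module.finite_def.mp inferInstance)
  obtain ⟨s, hs⟩ := CompleteLattice.IsCompactElement.exists_finset_of_le_iSup _ hcomp V (le_of_eq htop.symm)
  have hOF' : OrthogonalFamily ℝ (fun γ : s => V γ) (fun γ : s => (V γ).subtypeₗᵢ) :=
    hOF.comp Subtype.val_injective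
  have hint : DirectSum.IsInternal (fun γ : s => V γ) := by
    rw [DirectSum.isInternal_submodule_iff_iSupIndep_and_iSup_eq_top]
    refine ⟨hOF'.independent, ?_⟩
    rw [iSup_subtype]
    refine le_antisymm le_top ?_
    simpa using hs
  have hn : Module.finrank ℝ E = d := finrank_euclideanSpace_fin
  set b := hint.subordinateOrthonormalBasis hn hOF' with hb
  set χ : Fin d → (Fin m → ℝ) := fun k => (hint.subordinateOrthonormalBasisIndex hn k hOF').val with hχ
  have hmem : ∀ k, b k ∈ V (χ k) :=
    fun k => hint.subordinateOrthonormalBasis_subordinate hn k hOF'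
  have heig : ∀ k i, T i (b k) = χ k i • b k := by
    intro k i
    have := (Submodule.mem_iInf _).mp (hmem k) i
    simpa [Module.End.mem_eigenspace_iff] using this
  refine ⟨Matrix.of (fun p k => b k p), fun i k => χ k i, ?_, ?_⟩
  · ext k l
    have horth := b.orthonormal
    rw [orthonormal_iff_ite] at horth
    have h2 := horth k l
    simp only [Matrix.mul_apply, Matrix.transpose_apply, Matrix.of_apply, Matrix.one_apply]
    rw [← h2]
    simp [E, PiLp.inner_apply, RCLike.inner_apply, mul_comm]
  · intro i
    ext p k
    have happ : (A i *ᵥ (fun q => b k q)) p = χ k i * b k p := by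
      have h3 : T i (b k) p = (χ k i • b k) p := by rw [heig k i]
      have h4 : T i (b k) p = (A i *ᵥ (fun q => b k q)) p := rfl
      rw [h4] at h3
      exact h3
    simp only [Matrix.mul_apply, Matrix.of_apply, Matrix.diagonal_apply]
    calc ∑ q, A i p q * b k q = (A i *ᵥ (fun q => b k q)) p := by
          simp [Matrix.mulVec, dotProduct]
    _ = χ k i * b k p := happ
    _ = ∑ q, Matrix.of (fun p k => b k p) p q * (if q = k then χ q i else 0) := by
        rw [Finset.sum_eq_single k]
        · simp [mul_comm]
        · intro x _ hx; simp [hx]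
        · intro h; exact absurd (Finset.mem_univ k) h

lemma flow_diag {d m : ℕ} (A : Fin m → Matrix (Fin d) (Fin d) ℝ) (y : Fin m → ℝ)
    (U : Matrix (Fin d) (Fin d) ℝ) (lam : Fin m → Fin d → ℝ)
    (hU : Uᵀ * U = 1) (hAU : ∀ i, A i * U = U * Matrix.diagonal (lam i))
    (Zf : ℝ → Matrix (Fin d) (Fin d) ℝ) (α : ℝ) (hα : 0 < α)
    (hinit : Zf 0 = α • (1 : Matrix (Fin d) (Fin d) ℝ))
    (hflow : ∀ t : ℝ, 0 ≤ t → ∀ p q : Fin d,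
      HasDerivAt (fun s => Zf s p q)
        ((-((2 : ℝ) • (gradLoss A y (Zf t * (Zf t)ᵀ) * Zf t))) p q) t)
    (t : ℝ) (ht : 0 ≤ t) :
    ∃ c : Fin m → ℝ, ∀ k,
      (Uᵀ * (Zf t * (Zf t)ᵀ) * U) k k = α ^ 2 * Real.exp (∑ i, c i * lam i k) := by
  classical
  have hUU' : U * Uᵀ = 1 := mul_eq_one_comm.mp hU
  have hcontZ : ∀ a b : Fin d, ∀ u : ℝ, 0 ≤ u → ContinuousAt (fun s => Zf s a b) u :=
    fun a b u hu => (hflow u hu a b).continuousAt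
  have hmaxc : Continuous (fun u : ℝ => max u 0) := continuous_id.max continuous_const
  have hcontZm : ∀ a b : Fin d, Continuous (fun u : ℝ => Zf (max u 0) a b) := by
    intro a b
    rw [continuous_iff_continuousAt]
    intro u
    exact ContinuousAt.comp (g := fun v => Zf v a b) (f := fun u : ℝ => max u 0)
      (hcontZ a b (max u 0) (le_max_right _ _)) hmaxc.continuousAt
  have hcontW : Continuous (fun u : ℝ => Zf (max u 0) * (Zf (max u 0))ᵀ) := by
    have h1 : Continuous (fun u : ℝ => Zf (max u 0)) := continuous_matrix hcontZm
    exact h1.matrix_mul h1.matrix_transpose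
  set r : Fin m → ℝ → ℝ :=
    fun i u => (((A i)ᵀ * (Zf (max u 0) * (Zf (max u 0))ᵀ)).trace) - y i with hr_def
  have hr_cont : ∀ i, Continuous (r i) :=
    fun i => ((continuous_const.matrix_mul hcontW).matrix_trace).sub continuous_const
  set g : Fin d → ℝ → ℝ := fun k u => 2 * ∑ i, r i u * lam i k with hg_def
  have hg_cont : ∀ k, Continuous (g k) := by
    intro k
    exact continuous_const.mul (continuous_finset_sum _ fun i _ =>
      (hr_cont i).mul continuous_const)
  set S : Fin d → ℝ → ℝ := fun k τ => ∫ u in (0:ℝ)..τ, g k u with hS_def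
  have hS : ∀ k τ, HasDerivAt (S k) (g k τ) τ := by
    intro k τ
    exact intervalIntegral.integral_hasDerivAt_right
      ((hg_cont k).intervalIntegrable _ _)
      ((hg_cont k).stronglyMeasurableAtFilter _ _)
      (hg_cont k).continuousAt
  have hS0 : ∀ k, S k 0 = 0 := fun k => intervalIntegral.integral_same
  set hz : ℝ → Matrix (Fin d) (Fin d) ℝ := fun s => Uᵀ * Zf s * U with hz_def
  have hz0 : hz 0 = α • (1 : Matrix (Fin d) (Fin d) ℝ) := by
    rw [hz_def]
    simp only [hinit, Matrix.mul_smul, Matrix.smul_mul, Matrix.mul_one]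
    rw [hU]
  -- derivative of hatted entries
  have hz_deriv : ∀ u : ℝ, 0 ≤ u → ∀ p q : Fin d,
      HasDerivAt (fun s => hz s p q) (-(g p u * hz u p q)) u := by
    intro u hu p q
    have hrepr : ∀ s, hz s p q = ∑ b, (∑ a, U a p * Zf s a b) * U b q := by
      intro s
      simp [hz_def, Matrix.mul_apply, Matrix.transpose_apply, Finset.sum_mul]
    set G : Matrix (Fin d) (Fin d) ℝ := gradLoss A y (Zf u * (Zf u)ᵀ) with hG_def
    set Z' : Matrix (Fin d) (Fin d) ℝ := -((2 : ℝ) • (G * Zf u)) with hZ'_def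
    have hD : HasDerivAt (fun s => hz s p q) (∑ b, (∑ a, U a p * Z' a b) * U b q) u := by
      have h0 : HasDerivAt (fun s => ∑ b, (∑ a, U a p * Zf s a b) * U b q)
          (∑ b, (∑ a, U a p * Z' a b) * U b q) u := by
        apply HasDerivAt.fun_sum
        intro b _
        apply HasDerivAt.mul_const
        apply HasDerivAt.fun_sum
        intro a _
        exact (hflow u hu a b).const_mul _
      exact h0.congr_of_eventuallyEq (Eventually.of_forall fun s => (hrepr s))
    have hval : (∑ b, (∑ a, U a p * Z' a b) * U b q) = -(g p u * hz u p q) := by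
      have h1 : (∑ b, (∑ a, U a p * Z' a b) * U b q) = (Uᵀ * Z' * U) p q := by
        simp [Matrix.mul_apply, Matrix.transpose_apply, Finset.sum_mul]
      rw [h1]
      have hmax : max u 0 = u := max_eq_left hu
      have hhatG : Uᵀ * G * U = Matrix.diagonal (fun k => ∑ i, r i u * lam i k) := by
        have hAi : ∀ i, Uᵀ * A i * U = Matrix.diagonal (lam i) := by
          intro i
          rw [Matrix.mul_assoc, hAU i, ← Matrix.mul_assoc, hU, Matrix.one_mul]
        rw [hG_def, gradLoss, Matrix.mul_sum, Finset.sum_mul]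
        have hterm : ∀ i, Uᵀ * ((((A i)ᵀ * (Zf u * (Zf u)ᵀ)).trace - y i) • A i) * U
            = (r i u) • Matrix.diagonal (lam i) := by
          intro i
          rw [Matrix.mul_smul, Matrix.smul_mul, hAi i, hr_def]
          simp [hmax]
        rw [Finset.sum_congr rfl (fun i _ => hterm i)]
        ext a b
        by_cases hab : a = b
        · simp [Matrix.sum_apply, Matrix.diagonal_apply, hab]
        · simp [Matrix.sum_apply, Matrix.diagonal_apply, hab]
      have hins : Uᵀ * (G * Zf u) * U = (Uᵀ * G * U) * (Uᵀ * Zf u * U) := by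
        have h2 : Uᵀ * G * U * (Uᵀ * Zf u * U) = Uᵀ * G * (U * Uᵀ) * (Zf u * U) := by
          noncomm_ring
        rw [h2, hUU', Matrix.mul_one]
        noncomm_ring
      have h3 : Uᵀ * Z' * U
          = -((2 : ℝ) • (Matrix.diagonal (fun k => ∑ i, r i u * lam i k) * hz u)) := by
        rw [hZ'_def]
        simp only [Matrix.mul_smul, Matrix.smul_mul, Matrix.mul_neg, Matrix.neg_mul]
        rw [hins, hhatG]
      rw [h3]
      simp only [Matrix.neg_apply, Matrix.smul_apply, Matrix.diagonal_mul, smul_eq_mul, hg_def]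
      ring
    rw [← hval]
    exact hD
  -- integrating factor
  have hconst : ∀ p q2 : Fin d, hz t p q2 * Real.exp (S p t) = hz 0 p q2 := by
    intro p q2
    have hder : ∀ x : ℝ, 0 ≤ x →
        HasDerivAt (fun s => hz s p q2 * Real.exp (S p s)) 0 x := by
      intro x hx
      have H := (hz_deriv x hx p q2).mul ((hS p x).exp)
      have hv : (-(g p x * hz x p q2) * Real.exp (S p x)
          + hz x p q2 * (Real.exp (S p x) * g p x)) = 0 := by ring
      rw [hv] at H
      exact H
    have hcont : ContinuousOn (fun s => hz s p q2 * Real.exp (S p s)) (Set.Icc 0 t) :=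
      fun x hx => ((hder x hx.1).continuousAt).continuousWithinAt
    have hder' : ∀ x ∈ Set.Ico 0 t, HasDerivWithinAt
        (fun s => hz s p q2 * Real.exp (S p s)) 0 (Set.Ici x) x :=
      fun x hx => (hder x hx.1).hasDerivWithinAt
    have := constant_of_has_deriv_right_zero hcont hder' t ⟨ht, le_refl t⟩
    simpa [hS0 p] using this
  have hzt : ∀ p q2 : Fin d, hz t p q2
      = (if p = q2 then α else 0) * Real.exp (-(S p t)) := by
    intro p q2
    have h := hconst p q2
    have h0 : hz 0 p q2 = (if p = q2 then α else 0) := by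
      rw [hz0]
      simp [Matrix.one_apply]
    rw [h0] at h
    have he : Real.exp (S p t) ≠ 0 := Real.exp_ne_zero _
    rw [← h, mul_assoc, ← Real.exp_add, add_neg_cancel, Real.exp_zero, mul_one]
  -- conclude
  refine ⟨fun i => -4 * ∫ u in (0:ℝ)..t, r i u, fun k => ?_⟩
  have hhat_mul : Uᵀ * (Zf t * (Zf t)ᵀ) * U = hz t * (hz t)ᵀ := by
    have htr : (hz t)ᵀ = Uᵀ * (Zf t)ᵀ * U := by
      rw [hz_def]
      simp [Matrix.transpose_mul, Matrix.mul_assoc]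
    rw [htr, hz_def]
    have h2 : Uᵀ * Zf t * U * (Uᵀ * (Zf t)ᵀ * U) = Uᵀ * Zf t * (U * Uᵀ) * ((Zf t)ᵀ * U) := by
      noncomm_ring
    rw [h2, hUU', Matrix.mul_one]
    noncomm_ring
  rw [hhat_mul]
  have hentry : (hz t * (hz t)ᵀ) k k = α ^ 2 * Real.exp (-(2 * S k t)) := by
    rw [Matrix.mul_apply]
    rw [Finset.sum_eq_single k]
    · rw [Matrix.transpose_apply, hzt k k, if_pos rfl]
      rw [show α * Real.exp (-(S k t)) * (α * Real.exp (-(S k t)))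
          = α ^ 2 * (Real.exp (-(S k t)) * Real.exp (-(S k t))) from by ring,
        ← Real.exp_add]
      ring_nf
    · intro b _ hb
      rw [Matrix.transpose_apply, hzt k b]
      simp [Ne.symm hb, hb]
    · intro h; exact absurd (Finset.mem_univ k) h
  rw [hentry]
  have hSkt : S k t = 2 * ∑ i, (∫ u in (0:ℝ)..t, r i u) * lam i k := by
    simp only [hS_def, hg_def]
    rw [intervalIntegral.integral_const_mul]
    rw [intervalIntegral.integral_finset_sum (f := fun i x => r i x * lam i k) (fun i _ =>
      ((hr_cont i).mul continuous_const).intervalIntegrable 0 t)]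
    congr 1
    exact Finset.sum_congr rfl fun i _ => intervalIntegral.integral_mul_const _ _
  congr 2
  rw [hSkt]
  have h4 : (∑ i, (-4 * (∫ u in (0:ℝ)..t, r i u)) * lam i k)
      = -4 * ∑ i, (∫ u in (0:ℝ)..t, r i u) * lam i k := by
    rw [Finset.mul_sum]
    exact Finset.sum_congr rfl fun i _ => by ring
  rw [h4]
  ring


lemma min_trace_aux {d m : ℕ} (lam : Fin m → Fin d → ℝ) (y : Fin m → ℝ)
    (F : ℝ → ℝ → Fin d → ℝ) (w : ℝ → Fin d → ℝ) (b q : Fin d → ℝ)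
    (hF : ∀ α : ℝ, 0 < α → ∀ t : ℝ, 0 ≤ t → ∃ c : Fin m → ℝ,
      ∀ k, F α t k = α ^ 2 * Real.exp (∑ i, c i * lam i k))
    (hFw : ∀ α : ℝ, 0 < α → ∀ k, Tendsto (fun t => F α t k) atTop (nhds (w α k)))
    (hwb : ∀ k, Tendsto (fun α => w α k) (nhdsWithin 0 (Set.Ioi 0)) (nhds (b k)))
    (hb0 : ∀ k, 0 ≤ b k) (hq0 : ∀ k, 0 ≤ q k)
    (hyb : ∀ i, ∑ k, lam i k * b k = y i) (hyq : ∀ i, ∑ k, lam i k * q k = y i) :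
    ∑ k, b k ≤ ∑ k, q k := by
  classical
  refine le_of_forall_pos_le_add fun ε hε => ?_
  -- error tolerances and constants
  set e : Fin d → ℝ := fun k => if b k = 0 then 1/2 else min (1/2) (b k / 4) with he_def
  have he : ∀ k, 0 < e k := by
    intro k
    by_cases h : b k = 0
    · simp [he_def, h]
    · have : 0 < b k := lt_of_le_of_ne (hb0 k) (Ne.symm h)
      simp only [he_def, if_neg h]
      exact lt_min (by norm_num) (by linarith)
  have he2 : ∀ k, e k ≤ 1/2 := by
    intro k
    by_cases h : b k = 0 <;> simp [he_def, h, min_le_left]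
  set K : ℝ := (∑ k, Real.log (b k + 1) * q k)
      + ∑ k, (if b k = 0 then 0 else Real.log (2 / b k) * b k) with hK_def
  -- choose α
  have hLtop : Tendsto (fun α : ℝ => 2 * -Real.log α) (nhdsWithin 0 (Set.Ioi 0)) atTop :=
    (tendsto_neg_atBot_atTop.comp Real.tendsto_log_nhdsGT_zero).const_mul_atTop
      (by norm_num)
  have hev : ∀ᶠ α in nhdsWithin (0:ℝ) (Set.Ioi 0),
      (0 < α ∧ α < 1 ∧ K ≤ ε * (2 * -Real.log α)) ∧ ∀ k, |w α k - b k| < e k := by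
    have e1 : ∀ᶠ α in nhdsWithin (0:ℝ) (Set.Ioi 0), 0 < α :=
      eventually_mem_nhdsWithin.mono fun α hα => hα
    have e2 : ∀ᶠ α in nhdsWithin (0:ℝ) (Set.Ioi 0), α < 1 :=
      (gt_mem_nhds (zero_lt_one : (0:ℝ) < 1)).filter_mono nhdsWithin_le_nhds
    have e3 : ∀ᶠ α in nhdsWithin (0:ℝ) (Set.Ioi 0), K ≤ ε * (2 * -Real.log α) := by
      refine (hLtop.eventually_ge_atTop (K / ε)).mono fun α hα => ?_
      rw [div_le_iff₀ hε] at hα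
      linarith
    have e4 : ∀ᶠ α in nhdsWithin (0:ℝ) (Set.Ioi 0), ∀ k, |w α k - b k| < e k := by
      rw [Filter.eventually_all]
      intro k
      have h := (Metric.tendsto_nhds.mp (hwb k)) (e k) (he k)
      exact h.mono fun α hα => by simpa [Real.dist_eq] using hα
    exact (e1.and (e2.and e3)).and e4
  obtain ⟨α, ⟨⟨hα0, hα1, hKL⟩, hwα⟩⟩ := hev.exists
  set L : ℝ := 2 * -Real.log α with hL_def
  have hLpos : 0 < L := by
    have := Real.log_neg hα0 hα1
    simp only [hL_def]; linarith
  -- choose t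
  have hevt : ∀ᶠ t in (atTop : Filter ℝ), (0 ≤ t) ∧ ∀ k, |F α t k - w α k| < e k := by
    refine (eventually_ge_atTop 0).and ?_
    rw [Filter.eventually_all]
    intro k
    have := (Metric.tendsto_nhds.mp (hFw α hα0 k)) (e k) (he k)
    exact this.mono fun t h => by simpa [Real.dist_eq] using h
  obtain ⟨t, ht0, hFt⟩ := hevt.exists
  obtain ⟨c, hc⟩ := hF α hα0 t ht0
  set Sv : Fin d → ℝ := fun k => ∑ i, c i * lam i k with hSv_def
  have hFpos : ∀ k, 0 < F α t k := fun k => by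
    rw [hc k]; positivity
  have hFb : ∀ k, |F α t k - b k| < 2 * e k := by
    intro k
    have h1 := hFt k
    have h2 := hwα k
    calc |F α t k - b k| ≤ |F α t k - w α k| + |w α k - b k| := abs_sub_le _ _ _
    _ < 2 * e k := by linarith
  have hFub : ∀ k, F α t k ≤ b k + 1 := by
    intro k
    have h1 := (abs_lt.mp (hFb k)).2
    have h2 := he2 k
    linarith
  have hFlb : ∀ k, b k ≠ 0 → b k / 2 ≤ F α t k := by
    intro k hk
    have h1 := (abs_lt.mp (hFb k)).1
    have h2 : e k ≤ b k / 4 := by simp only [he_def, if_neg hk]; exact min_le_right _ _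
    linarith
  -- key identity
  have hSv0 : ∑ k, Sv k * (b k - q k) = 0 := by
    have h1 : ∀ k, Sv k * (b k - q k) = ∑ i, c i * (lam i k * (b k - q k)) := by
      intro k; rw [hSv_def]; rw [Finset.sum_mul]
      exact Finset.sum_congr rfl fun i _ => by ring
    rw [Finset.sum_congr rfl fun k _ => h1 k, Finset.sum_comm]
    apply Finset.sum_eq_zero
    intro i _
    rw [← Finset.mul_sum]
    have h2 : ∑ k, lam i k * (b k - q k) = 0 := by
      have h3 : ∀ k, lam i k * (b k - q k) = lam i k * b k - lam i k * q k :=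
        fun k => by ring
      rw [Finset.sum_congr rfl fun k _ => h3 k, Finset.sum_sub_distrib, hyb i, hyq i, sub_self]
    rw [h2, mul_zero]
  have hlog : ∀ k, Sv k = Real.log (F α t k) + L := by
    intro k
    rw [hc k, Real.log_mul (by positivity) (Real.exp_ne_zero _), Real.log_exp, Real.log_pow,
      hL_def]
    push_cast
    ring
  have hid : ∑ k, (b k - q k) = (1/L) * ∑ k, Real.log (F α t k) * (q k - b k) := by
    have h1 : ∀ k, Real.log (F α t k) * (q k - b k) = (Sv k - L) * (q k - b k) := by
      intro k; rw [hlog k]; ring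
    rw [Finset.sum_congr rfl fun k _ => h1 k]
    have h2 : ∑ k, (Sv k - L) * (q k - b k)
        = (∑ k, Sv k * (q k - b k)) - L * ∑ k, (q k - b k) := by
      rw [Finset.mul_sum, ← Finset.sum_sub_distrib]
      exact Finset.sum_congr rfl fun k _ => by ring
    have h3 : ∑ k, Sv k * (q k - b k) = 0 := by
      have h4 : ∀ k, Sv k * (q k - b k) = -(Sv k * (b k - q k)) := fun k => by ring
      rw [Finset.sum_congr rfl fun k _ => h4 k, Finset.sum_neg_distrib, hSv0, neg_zero]
    have h5 : ∑ k, (q k - b k) = -∑ k, (b k - q k) := by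
      rw [← Finset.sum_neg_distrib]
      exact Finset.sum_congr rfl fun k _ => by ring
    rw [h2, h3, h5]
    field_simp
    ring
  -- bound the sum
  have hbound : ∑ k, Real.log (F α t k) * (q k - b k) ≤ K := by
    rw [hK_def]
    have hsplit : ∀ k, Real.log (F α t k) * (q k - b k)
        = Real.log (F α t k) * q k + (-(Real.log (F α t k))) * b k := fun k => by ring
    rw [Finset.sum_congr rfl fun k _ => hsplit k, Finset.sum_add_distrib]
    apply add_le_add
    · apply Finset.sum_le_sum
      intro k _
      exact mul_le_mul_of_nonneg_right (Real.log_le_log (hFpos k) (hFub k)) (hq0 k)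
    · apply Finset.sum_le_sum
      intro k _
      by_cases hk : b k = 0
      · simp [hk]
      · have hbk : 0 < b k := lt_of_le_of_ne (hb0 k) (Ne.symm hk)
        rw [if_neg hk]
        apply mul_le_mul_of_nonneg_right _ (hb0 k)
        rw [← Real.log_inv]
        apply Real.log_le_log (inv_pos.2 (hFpos k))
        rw [inv_le_comm₀ (hFpos k) (by positivity)]
        have := hFlb k hk
        calc (2 / b k)⁻¹ = b k / 2 := by rw [inv_div]
        _ ≤ F α t k := this
  -- conclude
  have hfinal : ∑ k, (b k - q k) ≤ ε := by
    rw [hid]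
    have h1 : (1/L) * ∑ k, Real.log (F α t k) * (q k - b k) ≤ (1/L) * K :=
      mul_le_mul_of_nonneg_left hbound (by positivity)
    have h2 : (1/L) * K ≤ ε := by
      rw [one_div, inv_mul_le_iff₀ hLpos]
      calc K ≤ ε * L := hKL
      _ = L * ε := by ring
    linarith
  rw [Finset.sum_sub_distrib] at hfinal
  linarith


/-- Gradient flow on `Z ↦ ℓ(Z Zᵀ)` initialized at `α·I` (for commuting, symmetric,
linearly independent measurement matrices) converges, as `α → 0⁺`, to a feasible PSD
matrix of minimal nuclear norm (= trace, for PSD matrices). -/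
theorem stmt0 {d m : ℕ}
    (A : Fin m → Matrix (Fin d) (Fin d) ℝ) (y : Fin m → ℝ)
    (hA_symm : ∀ i, (A i).IsSymm)
    (hA_comm : ∀ i j, Commute (A i) (A j))
    (hA_li : LinearIndependent ℝ A)
    (Z : ℝ → ℝ → Matrix (Fin d) (Fin d) ℝ)
    (hZ_init : ∀ α : ℝ, 0 < α → Z α 0 = α • (1 : Matrix (Fin d) (Fin d) ℝ))
    (hZ_flow : ∀ α : ℝ, 0 < α → ∀ t : ℝ, 0 ≤ t → ∀ p q : Fin d,
      HasDerivAt (fun s => Z α s p q)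
        ((-((2 : ℝ) • (gradLoss A y (Z α t * (Z α t)ᵀ) * Z α t))) p q) t)
    (Winf : ℝ → Matrix (Fin d) (Fin d) ℝ)
    (hWinf : ∀ α : ℝ, 0 < α →
      Tendsto (fun t => Z α t * (Z α t)ᵀ) atTop (nhds (Winf α)))
    (Wbar : Matrix (Fin d) (Fin d) ℝ)
    (hWbar : Tendsto Winf (nhdsWithin 0 (Set.Ioi 0)) (nhds Wbar))
    (hWbar_psd : Wbar.PosSemidef)
    (hWbar_feas : ∀ i, ((A i)ᵀ * Wbar).trace = y i) :
    ∀ W : Matrix (Fin d) (Fin d) ℝ, W.PosSemidef →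
      (∀ i, ((A i)ᵀ * W).trace = y i) → Wbar.trace ≤ W.trace := by
  classical
  intro W hW hWfeas
  obtain ⟨U, lam, hU, hAU⟩ := exists_simul_diag A hA_symm hA_comm
  have hUU' : U * Uᵀ = 1 := mul_eq_one_comm.mp hU
  have hAi : ∀ i, Uᵀ * A i * U = Matrix.diagonal (lam i) := by
    intro i
    rw [Matrix.mul_assoc, hAU i, ← Matrix.mul_assoc, hU, Matrix.one_mul]
  have htr : ∀ X : Matrix (Fin d) (Fin d) ℝ, (Uᵀ * X * U).trace = X.trace := by
    intro X
    rw [Matrix.trace_mul_comm, ← Matrix.mul_assoc, hUU', Matrix.one_mul]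
  have hfeasT : ∀ (i : Fin m) (X : Matrix (Fin d) (Fin d) ℝ),
      ((A i)ᵀ * X).trace = ∑ k, lam i k * (Uᵀ * X * U) k k := by
    intro i X
    rw [hA_symm i]
    have h1 : (Uᵀ * (A i * X) * U).trace = (A i * X).trace := by
      rw [Matrix.trace_mul_comm, ← Matrix.mul_assoc, hUU', Matrix.one_mul]
    rw [← h1]
    have h2 : Uᵀ * (A i * X) * U = Matrix.diagonal (lam i) * (Uᵀ * X * U) := by
      rw [← hAi i]
      have h3 : Uᵀ * A i * U * (Uᵀ * X * U) = Uᵀ * A i * (U * Uᵀ) * (X * U) := by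
        noncomm_ring
      rw [h3, hUU', Matrix.mul_one]
      noncomm_ring
    rw [h2]
    simp [Matrix.trace, Matrix.diag, Matrix.diagonal_mul]
  have hpsd : ∀ X : Matrix (Fin d) (Fin d) ℝ, X.PosSemidef →
      ∀ k, 0 ≤ (Uᵀ * X * U) k k := by
    intro X hX k
    have h := hX.dotProduct_mulVec_nonneg (fun a => U a k)
    have heq : (star (fun a => U a k)) ⬝ᵥ (X *ᵥ (fun a => U a k)) = (Uᵀ * X * U) k k := by
      simp only [star_trivial, dotProduct, Matrix.mulVec, Matrix.mul_apply,
        Matrix.transpose_apply, Finset.sum_mul, Finset.mul_sum]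
      rw [Finset.sum_comm]
      exact Finset.sum_congr rfl fun a _ => Finset.sum_congr rfl fun b2 _ => by ring
    rw [heq] at h
    exact h
  have hcontE : ∀ k : Fin d, Continuous
      (fun X : Matrix (Fin d) (Fin d) ℝ => (Uᵀ * X * U) k k) := fun k =>
    ((continuous_const.matrix_mul continuous_id).matrix_mul continuous_const).matrix_elem k k
  have hmain := min_trace_aux lam y
      (fun α t k => (Uᵀ * (Z α t * (Z α t)ᵀ) * U) k k)
      (fun α k => (Uᵀ * Winf α * U) k k)
      (fun k => (Uᵀ * Wbar * U) k k)
      (fun k => (Uᵀ * W * U) k k)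
      (fun α hα t ht =>
        flow_diag A y U lam hU hAU (Z α) α hα (hZ_init α hα) (hZ_flow α hα) t ht)
      (fun α hα k => ((hcontE k).tendsto (Winf α)).comp (hWinf α hα))
      (fun k => ((hcontE k).tendsto Wbar).comp hWbar)
      (fun k => hpsd Wbar hWbar_psd k)
      (fun k => hpsd W hW k)
      (fun i => by rw [← hfeasT i Wbar]; exact hWbar_feas i)
      (fun i => by rw [← hfeasT i W]; exact hWfeas i)
  have h1 : Wbar.trace = ∑ k, (Uᵀ * Wbar * U) k k := by
    rw [← htr Wbar]; simp [Matrix.trace, Matrix.diag]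
  have h2 : W.trace = ∑ k, (Uᵀ * W * U) k k := by
    rw [← htr W]; simp [Matrix.trace, Matrix.diag]
  rw [h1, h2]
  exact hmain
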